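/- arXiv:1808.02674 — 2 statements merged into one kernel-verified Lean document; each statement's English description precedes it below -/
import Mathlib

section
/- Let G be a connected bipartite graph on N vertices with bipartition sizes n₁ = |V₁| ≤ n₂ = |V₂|, and let ℓ_k := diam(HM_k) + 1. If n − k ≥ n₁, then N_B^n(ℓ_k) ≥ N^{n−k+1−n₁}, i.e. N_B^n(ℓ_k) ≥ C·N^{n−k} with the constant C = N^{1−n₁} depending only on G. -/
open Filter Finset

/-- A subgraph `B` of a graph `H` is an `ℓ`-box if any two of its vertices are at
distance at most `ℓ - 1` *within* `B`. -/
def SimpleGraph.IsBox {V : Type*} (H : SimpleGraph V) (ℓ : ℕ) (B : H.Subgraph) : Prop :=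
  ∀ u v : B.verts, B.coe.Reachable u v ∧ B.coe.dist u v ≤ ℓ - 1

/-- `coveringNumber H ℓ` is the minimum number of `ℓ`-boxes whose vertex sets cover `H`. -/
noncomputable def coveringNumber {V : Type*} (H : SimpleGraph V) (ℓ : ℕ) : ℕ :=
  sInf {m : ℕ | ∃ F : Finset H.Subgraph, F.card = m ∧ (∀ B ∈ F, H.IsBox ℓ B) ∧
    ∀ v : V, ∃ B ∈ F, v ∈ B.verts}

/-- The adjacency-generating relation of the hierarchical model `HM_n`: the two words
agree on a (maximal) common prefix of length `k`; beyond the prefix one word has all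
its letters in `V₁` (`typ = true`) and the other has all its letters in `V₂`
(`typ = false`); and every coordinate pair beyond the prefix is an edge of the base
graph `G`. -/
def HMRel (N : ℕ) (G : SimpleGraph (Fin N)) (typ : Fin N → Bool) (n : ℕ)
    (x y : Fin n → Fin N) : Prop :=
  ∃ k : Fin n,
    (∀ i : Fin n, i < k → x i = y i) ∧
    (∃ t : Bool, (∀ i : Fin n, k ≤ i → typ (x i) = t) ∧
                 (∀ i : Fin n, k ≤ i → typ (y i) = !t)) ∧
    (∀ i : Fin n, k ≤ i → G.Adj (x i) (y i))

/-- The hierarchical graph `HM_n` on words of length `n` over the alphabet `Fin N`. -/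
def HM (N : ℕ) (G : SimpleGraph (Fin N)) (typ : Fin N → Bool) (n : ℕ) :
    SimpleGraph (Fin n → Fin N) :=
  SimpleGraph.fromRel (HMRel N G typ n)


private lemma bool_eq_not {a b : Bool} (h : ¬ a = b) : a = !b := by
  cases a <;> cases b <;> simp_all

section GAux

variable {N : ℕ} {G : SimpleGraph (Fin N)} {typ : Fin N → Bool}

private lemma exists_adj (hconn : G.Connected) (hV1 : ∃ x, typ x = true)
    (hV2 : ∃ x, typ x = false) (v : Fin N) : ∃ w, G.Adj v w := by
  obtain ⟨u, hu⟩ : ∃ u, typ u = !typ v := by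
    cases h : typ v
    · obtain ⟨x, hx⟩ := hV1; exact ⟨x, by simp [hx, h]⟩
    · obtain ⟨x, hx⟩ := hV2; exact ⟨x, by simp [hx, h]⟩
  obtain ⟨p⟩ := hconn v u
  cases p with
  | nil => simp at hu
  | cons h q => exact ⟨_, h⟩

private lemma walk_parity (hbip : ∀ x y : Fin N, G.Adj x y → typ x ≠ typ y) :
    ∀ {u v : Fin N} (p : G.Walk u v), (typ u = typ v ↔ Even p.length) := by
  intro u v p
  induction p with
  | nil => simp
  | @cons u w v h q ih =>
    have hne := hbip _ _ h
    simp only [SimpleGraph.Walk.length_cons, Nat.even_add_one]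
    cases hb : typ u <;> cases hc : typ w <;> cases hd : typ v <;> simp_all

private lemma walk_extend {nb : Fin N → Fin N} (hnb : ∀ v, G.Adj v (nb v)) :
    ∀ (s : ℕ) {u v : Fin N} (p : G.Walk u v),
      ∃ q : G.Walk u v, q.length = p.length + 2 * s := by
  intro s
  induction s with
  | zero => exact fun p => ⟨p, by simp⟩
  | succ s ih =>
    intro u v p
    obtain ⟨q, hq⟩ := ih (p.append (SimpleGraph.Walk.cons (hnb v)
      (SimpleGraph.Walk.cons (hnb v).symm SimpleGraph.Walk.nil)))
    refine ⟨q, ?_⟩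
    simp only [SimpleGraph.Walk.length_append, SimpleGraph.Walk.length_cons,
      SimpleGraph.Walk.length_nil] at hq
    omega

private lemma path_count (hbip : ∀ x y : Fin N, G.Adj x y → typ x ≠ typ y) :
    ∀ {u v : Fin N} (p : G.Walk u v), p.IsPath →
      p.length + (if typ u = true then 1 else 0) ≤ 2 * (p.support.countP (fun z => typ z)) := by
  intro u v p
  induction p with
  | nil =>
    intro _
    simp only [SimpleGraph.Walk.length_nil, SimpleGraph.Walk.support_nil, List.countP_cons,
      List.countP_nil]
    split <;> omega
  | @cons u w v h q ih =>
    intro hp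
    have hq := ih hp.of_cons
    have hw : typ w = !typ u := bool_eq_not (Ne.symm (hbip _ _ h))
    simp only [SimpleGraph.Walk.support_cons, List.countP_cons, SimpleGraph.Walk.length_cons]
    cases hu : typ u
    · rw [hu, Bool.not_false] at hw
      simp only [hw, if_pos rfl, hu, if_true] at hq ⊢
      simp only [Bool.false_eq_true, if_false, if_true]
      omega
    · rw [hu, Bool.not_true] at hw
      simp only [hw, Bool.false_eq_true, if_false, hu, if_pos rfl, if_true] at hq ⊢
      omega

private lemma count_le {n₁ : ℕ}
    (hn₁ : n₁ = (Finset.univ.filter fun x : Fin N => typ x = true).card)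
    {u v : Fin N} {p : G.Walk u v} (hp : p.IsPath) :
    p.support.countP (fun z => typ z) ≤ n₁ := by
  classical
  rw [List.countP_eq_length_filter]
  have hnd : (p.support.filter (fun z => typ z)).Nodup := hp.support_nodup.filter _
  rw [← List.toFinset_card_of_nodup hnd, hn₁]
  apply Finset.card_le_card
  intro x hx
  simp only [List.mem_toFinset, List.mem_filter] at hx
  simp [hx.2]

private lemma exists_walk_exact (hconn : G.Connected)
    (hbip : ∀ x y : Fin N, G.Adj x y → typ x ≠ typ y) {n₁ : ℕ}
    (hn₁ : n₁ = (Finset.univ.filter fun x : Fin N => typ x = true).card)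
    {nb : Fin N → Fin N} (hnb : ∀ v, G.Adj v (nb v)) (u v : Fin N) (T : ℕ)
    (hpar : (typ u = typ v) ↔ Even T) (hT : 2 * n₁ ≤ T + 1) :
    ∃ q : G.Walk u v, q.length = T := by
  obtain ⟨p0⟩ := hconn u v
  obtain ⟨p, hp⟩ := p0.toPath
  have hlen : p.length ≤ 2 * n₁ := by
    have h1 := path_count hbip p hp
    have h2 := count_le hn₁ hp
    omega
  have hpar2 := walk_parity hbip p
  have hpp : Even T ↔ Even p.length := hpar.symm.trans hpar2
  rw [Nat.even_iff, Nat.even_iff] at hpp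
  obtain ⟨s, hs⟩ : ∃ s, T = p.length + 2 * s := by
    have hle : p.length ≤ T := by omega
    exact ⟨(T - p.length) / 2, by omega⟩
  obtain ⟨q, hq⟩ := walk_extend hnb s p
  exact ⟨q, by omega⟩

end GAux

section PhiAux

variable {N : ℕ} {G : SimpleGraph (Fin N)} {typ : Fin N → Bool}

private def hmExt {N : ℕ} (d : Fin N) {n : ℕ} (p : Fin n → Fin N) (i : ℕ) : Fin N :=
  if h : i < n then p ⟨i, h⟩ else d

private def hmPhi {N : ℕ} (typ : Fin N → Bool) (d : Fin N) {n : ℕ} (m' L : ℕ)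
    (p : Fin n → Fin N) : ℕ :=
  ((Finset.Ico m' (m' + L)).filter
    fun i => ¬ (typ (hmExt d p i) = typ (hmExt d p (i + 1)))).card

private lemma hm_adj_elim {n : ℕ} {x y : Fin n → Fin N} (h : (HM N G typ n).Adj x y) :
    ∃ (j : Fin n) (t : Bool), (∀ i : Fin n, (i : ℕ) < (j : ℕ) → x i = y i) ∧
      (∀ i : Fin n, (j : ℕ) ≤ (i : ℕ) → typ (x i) = t) ∧
      (∀ i : Fin n, (j : ℕ) ≤ (i : ℕ) → typ (y i) = !t) ∧
      (∀ i : Fin n, (j : ℕ) ≤ (i : ℕ) → G.Adj (x i) (y i)) := by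
  simp only [HM, SimpleGraph.fromRel_adj] at h
  rcases h.2 with hr | hr <;> unfold HMRel at hr
  · obtain ⟨j, h1, ⟨t, h2, h3⟩, h4⟩ := hr
    exact ⟨j, t, fun i hi => h1 i hi, fun i hi => h2 i hi, fun i hi => h3 i hi,
      fun i hi => h4 i hi⟩
  · obtain ⟨j, h1, ⟨t, h2, h3⟩, h4⟩ := hr
    exact ⟨j, !t, fun i hi => (h1 i hi).symm, fun i hi => h3 i hi,
      fun i hi => by simpa using h2 i hi, fun i hi => (h4 i hi).symm⟩

private lemma hm_phi_adj {n m' L : ℕ} {d : Fin N} (hml : m' + L < n) {x y : Fin n → Fin N}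
    (h : (HM N G typ n).Adj x y) : hmPhi typ d m' L y ≤ hmPhi typ d m' L x + 1 := by
  classical
  obtain ⟨j, t, hpre, hxt, hyt, -⟩ := hm_adj_elim h
  unfold hmPhi
  have hsub : ((Finset.Ico m' (m' + L)).filter
      fun i => ¬ (typ (hmExt d y i) = typ (hmExt d y (i + 1)))) ⊆
      insert ((j : ℕ) - 1) ((Finset.Ico m' (m' + L)).filter
      fun i => ¬ (typ (hmExt d x i) = typ (hmExt d x (i + 1)))) := by
    intro i hi
    simp only [Finset.mem_filter, Finset.mem_Ico] at hi
    obtain ⟨⟨hi1, hi2⟩, hne⟩ := hi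
    have hin : i < n := by omega
    have hin' : i + 1 < n := by omega
    unfold hmExt at hne
    rw [dif_pos hin, dif_pos hin'] at hne
    by_cases hij : (j : ℕ) ≤ i
    · exact absurd (by rw [hyt ⟨i, hin⟩ hij, hyt ⟨i + 1, hin'⟩ (show (j:ℕ) ≤ i + 1 by omega)]) hne
    · push_neg at hij
      by_cases hij2 : i + 1 < (j : ℕ)
      · apply Finset.mem_insert_of_mem
        simp only [Finset.mem_filter, Finset.mem_Ico]
        refine ⟨⟨hi1, hi2⟩, ?_⟩
        unfold hmExt
        rw [dif_pos hin, dif_pos hin']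
        rw [hpre ⟨i, hin⟩ hij, hpre ⟨i + 1, hin'⟩ hij2]
        exact hne
      · have : i = (j : ℕ) - 1 := by omega
        exact this ▸ Finset.mem_insert_self _ _
  calc ((Finset.Ico m' (m' + L)).filter
      fun i => ¬ (typ (hmExt d y i) = typ (hmExt d y (i + 1)))).card
      ≤ (insert ((j : ℕ) - 1) ((Finset.Ico m' (m' + L)).filter
        fun i => ¬ (typ (hmExt d x i) = typ (hmExt d x (i + 1))))).card :=
        Finset.card_le_card hsub
    _ ≤ _ + 1 := Finset.card_insert_le _ _

private lemma hm_phi_zero {n m' L : ℕ} {d : Fin N} (hml : m' + L < n) {x : Fin n → Fin N}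
    {t : Bool} {j : ℕ} (hj : j ≤ m') (hx : ∀ i : Fin n, j ≤ (i : ℕ) → typ (x i) = t) :
    hmPhi typ d m' L x = 0 := by
  classical
  unfold hmPhi
  rw [Finset.card_eq_zero, Finset.filter_eq_empty_iff]
  intro i hi
  simp only [Finset.mem_Ico] at hi
  have hin : i < n := by omega
  have hin' : i + 1 < n := by omega
  unfold hmExt
  rw [dif_pos hin, dif_pos hin', hx ⟨i, hin⟩ (show j ≤ i by omega), hx ⟨i + 1, hin'⟩ (show j ≤ i + 1 by omega)]
  simp

private lemma hm_phi_walk {n m' L : ℕ} {d : Fin N} (hml : m' + L < n) {x y : Fin n → Fin N}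
    (w : (HM N G typ n).Walk x y) :
    hmPhi typ d m' L y ≤ hmPhi typ d m' L x + w.length := by
  induction w with
  | nil => simp
  | @cons a b c h q ih =>
    have h1 := hm_phi_adj (d := d) hml h
    simp only [SimpleGraph.Walk.length_cons]
    omega

private lemma hm_walk_lower {n m' L : ℕ} {d : Fin N} (hml : m' + L < n) :
    ∀ {x y : Fin n → Fin N} (w : (HM N G typ n).Walk x y),
      (∃ i : Fin n, (i : ℕ) ≤ m' ∧ x i ≠ y i) →
      hmPhi typ d m' L x + hmPhi typ d m' L y + 1 ≤ w.length := by
  intro x y w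
  induction w with
  | nil => rintro ⟨i, -, hne⟩; exact absurd rfl hne
  | @cons a b c h q ih =>
    rintro ⟨i, him, hne⟩
    obtain ⟨j, t, hpre, hxt, hbt, -⟩ := hm_adj_elim h
    simp only [SimpleGraph.Walk.length_cons]
    by_cases hj : (j : ℕ) ≤ (i : ℕ)
    · have h1 : hmPhi typ d m' L a = 0 := hm_phi_zero hml (le_trans hj him) hxt
      have h2 : hmPhi typ d m' L b = 0 := hm_phi_zero hml (le_trans hj him) hbt
      have h3 := hm_phi_walk (d := d) hml q
      omega
    · push_neg at hj
      have hxb : a i = b i := hpre i hj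
      have h4 := ih ⟨i, him, fun e => hne (hxb.trans e)⟩
      have h5 := hm_phi_adj (d := d) hml h.symm
      omega

end PhiAux

section FamAux

variable {N : ℕ} {G : SimpleGraph (Fin N)} {typ : Fin N → Bool}

private def hmFam {N : ℕ} (typ : Fin N → Bool) (c : Bool → Fin N) (m' : ℕ) {n : ℕ}
    (w : Fin (m' + 1) → Fin N) : Fin n → Fin N :=
  fun i => if h : (i : ℕ) ≤ m' then w ⟨i, Nat.lt_succ_of_le h⟩
    else c (xor (decide (((i : ℕ) - m') % 2 = 1)) (typ (w ⟨m', Nat.lt_succ_self m'⟩)))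

private lemma hmFam_typ {c : Bool → Fin N} (hc : ∀ t, typ (c t) = t) {m' n : ℕ}
    (w : Fin (m' + 1) → Fin N) {i : ℕ} (him : m' ≤ i) (hin : i < n) {d : Fin N} :
    typ (hmExt d (hmFam (n := n) typ c m' w) i) =
      xor (decide ((i - m') % 2 = 1)) (typ (w ⟨m', Nat.lt_succ_self m'⟩)) := by
  unfold hmExt hmFam
  rw [dif_pos hin]
  rcases eq_or_lt_of_le him with he | hlt
  · subst he
    rw [dif_pos (le_refl m')]
    simp
  · rw [dif_neg (show ¬ ((⟨i, hin⟩ : Fin n) : ℕ) ≤ m' by simp; omega), hc]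

private lemma hmFam_phi {c : Bool → Fin N} (hc : ∀ t, typ (c t) = t) {m' L n : ℕ}
    (hn : m' + 1 + L = n) (w : Fin (m' + 1) → Fin N) {d : Fin N} :
    hmPhi typ d m' L (hmFam (n := n) typ c m' w) = L := by
  classical
  unfold hmPhi
  rw [Finset.filter_true_of_mem, Nat.card_Ico]
  · omega
  · intro i hi
    simp only [Finset.mem_Ico] at hi
    have h1 := hmFam_typ (n := n) hc w (d := d) (i := i) hi.1 (by omega)
    have h2 := hmFam_typ (n := n) hc w (d := d) (i := i + 1) (by omega) (by omega)
    rw [h1, h2]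
    by_cases hp : (i - m') % 2 = 1
    · have hp2 : ¬ ((i + 1 - m') % 2 = 1) := by omega
      simp [hp, hp2]
    · have hp2 : (i + 1 - m') % 2 = 1 := by omega
      simp [hp, hp2]

private lemma hmFam_ne {c : Bool → Fin N} {m' n : ℕ} (hn : m' < n)
    {w w' : Fin (m' + 1) → Fin N} (hww : w ≠ w') :
    ∃ i : Fin n, (i : ℕ) ≤ m' ∧ hmFam typ c m' w i ≠ hmFam (n := n) typ c m' w' i := by
  have hex : ∃ i0 : Fin (m' + 1), w i0 ≠ w' i0 := by
    by_contra hcon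
    push_neg at hcon
    exact hww (funext hcon)
  obtain ⟨i0, hi0⟩ := hex
  have hi0m : (i0 : ℕ) ≤ m' := Nat.lt_succ_iff.mp i0.2
  refine ⟨⟨i0, by omega⟩, hi0m, ?_⟩
  unfold hmFam
  rw [dif_pos hi0m, dif_pos hi0m]
  simpa using hi0

end FamAux

section WalkAux

variable {N : ℕ} {G : SimpleGraph (Fin N)} {typ : Fin N → Bool}

/-- Mono-izing walk: from a word whose letters from position `j` on all have type `t`,
we can reach a fully monochromatic word in at most `j` steps. -/
private lemma hm_mono {k : ℕ} (hk : 0 < k) {nb : Fin N → Fin N} (hnb : ∀ v, G.Adj v (nb v))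
    (hbip : ∀ x y : Fin N, G.Adj x y → typ x ≠ typ y) :
    ∀ (j : ℕ) (x : Fin k → Fin N) (t : Bool), (∀ i : Fin k, j ≤ (i : ℕ) → typ (x i) = t) →
      ∃ (t' : Bool) (y : Fin k → Fin N), (∀ i, typ (y i) = t') ∧
        ∃ wk : (HM N G typ k).Walk x y, wk.length ≤ j := by
  intro j
  induction j with
  | zero =>
    intro x t hx
    exact ⟨t, x, fun i => hx i (Nat.zero_le _), SimpleGraph.Walk.nil, Nat.le_refl 0⟩
  | succ j ih =>
    intro x t hx
    by_cases hjk2 : j < k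
    · by_cases hjk : j + 1 < k
      · by_cases ht : typ (x ⟨j, hjk2⟩) = t
        · obtain ⟨t', y, hy, wk, hwk⟩ := ih x t (fun i hi => by
            rcases eq_or_lt_of_le hi with he | hlt
            · rw [show i = ⟨j, hjk2⟩ from Fin.ext he.symm]; exact ht
            · exact hx i hlt)
          exact ⟨t', y, hy, wk, by omega⟩
        · set z : Fin k → Fin N := fun i => if j < (i : ℕ) then nb (x i) else x i with hz
          have hzval : ∀ i : Fin k, j < (i : ℕ) → z i = nb (x i) := fun i hi => if_pos hi
          have hzval' : ∀ i : Fin k, ¬ j < (i : ℕ) → z i = x i := fun i hi => if_neg hi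
          have hztyp : ∀ i : Fin k, j + 1 ≤ (i : ℕ) → typ (z i) = !t := by
            intro i hi
            rw [hzval i (by omega), bool_eq_not (Ne.symm (hbip _ _ (hnb (x i)))), hx i (by omega)]
          have hadj : (HM N G typ k).Adj x z := by
            simp only [HM, SimpleGraph.fromRel_adj]
            constructor
            · intro he
              have h1 : (k - 1 : ℕ) < k := by omega
              have h2 : typ (z ⟨k - 1, h1⟩) = !t := hztyp _ (by simp; omega)
              have h3 : typ (x ⟨k - 1, h1⟩) = t := hx _ (by simp; omega)
              rw [← he, h3] at h2
              simp at h2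
            · left
              unfold HMRel
              refine ⟨⟨j + 1, hjk⟩, ?_, ⟨t, ?_, ?_⟩, ?_⟩
              · exact fun i hi => (hzval' i (by
                  have : (i : ℕ) < j + 1 := hi
                  omega)).symm
              · exact fun i hi => hx i hi
              · exact fun i hi => hztyp i hi
              · intro i hi
                rw [hzval i (by have : (j + 1 : ℕ) ≤ (i : ℕ) := hi; omega)]
                exact hnb (x i)
          have hmono : ∀ i : Fin k, j ≤ (i : ℕ) → typ (z i) = !t := by
            intro i hi
            rcases eq_or_lt_of_le hi with he | hlt
            · rw [hzval' i (by omega), show i = ⟨j, hjk2⟩ from Fin.ext he.symm]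
              exact bool_eq_not ht
            · exact hztyp i hlt
          obtain ⟨t', y, hy, wk, hwk⟩ := ih z (!t) hmono
          exact ⟨t', y, hy, SimpleGraph.Walk.cons hadj wk,
            by simp only [SimpleGraph.Walk.length_cons]; omega⟩
      · -- j + 1 = k : the hypothesis only constrains nothing new; use type of last letter
        obtain ⟨t', y, hy, wk, hwk⟩ := ih x (typ (x ⟨j, hjk2⟩)) (fun i hi => by
          have : (i : ℕ) = j := by have := i.isLt; omega
          rw [show i = ⟨j, hjk2⟩ from Fin.ext this])
        exact ⟨t', y, hy, wk, by omega⟩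
    · -- j ≥ k : vacuous monotonicity hypothesis
      obtain ⟨t', y, hy, wk, hwk⟩ := ih x t (fun i hi => absurd hi (by have := i.isLt; omega))
      exact ⟨t', y, hy, wk, by omega⟩

private lemma walk_head {u v : Fin N} (p : G.Walk u v) {T : ℕ} (hp : p.length = T + 1) :
    ∃ z, G.Adj u z ∧ ∃ q : G.Walk z v, q.length = T := by
  cases p with
  | nil => simp at hp
  | cons h q => exact ⟨_, h, q, by simpa using hp⟩

/-- Synchronized parallel walks: a family of `G`-walks of common length `T`, starting at a
monochromatic word, yields an `HM`-walk of length at most `T`. -/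
private lemma hm_sync {k : ℕ} (hk : 0 < k)
    (hbip : ∀ x y : Fin N, G.Adj x y → typ x ≠ typ y) :
    ∀ (T : ℕ) (x y : Fin k → Fin N) (tx : Bool), (∀ i, typ (x i) = tx) →
      (∀ i, ∃ p : G.Walk (x i) (y i), p.length = T) →
      ∃ w : (HM N G typ k).Walk x y, w.length ≤ T := by
  intro T
  induction T with
  | zero =>
    intro x y tx hx hw
    have hxy : x = y := funext fun i => by
      obtain ⟨p, hp⟩ := hw i
      exact SimpleGraph.Walk.eq_of_length_eq_zero hp
    subst hxy
    exact ⟨SimpleGraph.Walk.nil, Nat.le_refl 0⟩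
  | succ T ih =>
    intro x y tx hx hw
    have hstep : ∀ i, ∃ (z : Fin N), G.Adj (x i) z ∧ ∃ q : G.Walk z (y i), q.length = T := by
      intro i
      obtain ⟨p, hp⟩ := hw i
      exact walk_head p hp
    choose z hzadj q hq using hstep
    have hztyp : ∀ i, typ (z i) = !tx := fun i => by
      rw [bool_eq_not (Ne.symm (hbip _ _ (hzadj i))), hx i]
    have hadj : (HM N G typ k).Adj x z := by
      simp only [HM, SimpleGraph.fromRel_adj]
      constructor
      · intro he
        have h2 := hztyp ⟨0, hk⟩
        rw [← he, hx ⟨0, hk⟩] at h2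
        simp at h2
      · left
        unfold HMRel
        refine ⟨⟨0, hk⟩, ?_, ⟨tx, fun i _ => hx i, fun i _ => hztyp i⟩, fun i _ => hzadj i⟩
        intro i hi
        exact absurd hi (by simp [Fin.lt_def])
    obtain ⟨w, hwl⟩ := ih z y (!tx) hztyp (fun i => ⟨q i, hq i⟩)
    exact ⟨SimpleGraph.Walk.cons hadj w, by simp only [SimpleGraph.Walk.length_cons]; omega⟩

/-- Connecting two monochromatic words in at most `2 * n₁` steps. -/
private lemma hm_connect {k : ℕ} (hk : 0 < k) (hconn : G.Connected)
    (hbip : ∀ x y : Fin N, G.Adj x y → typ x ≠ typ y) {n₁ : ℕ}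
    (hn₁ : n₁ = (Finset.univ.filter fun x : Fin N => typ x = true).card) (hn1pos : 1 ≤ n₁)
    {nb : Fin N → Fin N} (hnb : ∀ v, G.Adj v (nb v))
    (x y : Fin k → Fin N) (tx ty : Bool) (hx : ∀ i, typ (x i) = tx) (hy : ∀ i, typ (y i) = ty) :
    ∃ w : (HM N G typ k).Walk x y, w.length ≤ 2 * n₁ := by
  by_cases he : tx = ty
  · have hwalks : ∀ i, ∃ p : G.Walk (x i) (y i), p.length = 2 * n₁ := fun i =>
      exists_walk_exact hconn hbip hn₁ hnb _ _ (2 * n₁)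
        (by rw [hx i, hy i]; exact iff_of_true he ⟨n₁, by ring⟩) (by omega)
    exact hm_sync hk hbip (2 * n₁) x y tx hx hwalks
  · have hwalks : ∀ i, ∃ p : G.Walk (x i) (y i), p.length = 2 * n₁ - 1 := fun i =>
      exists_walk_exact hconn hbip hn₁ hnb _ _ (2 * n₁ - 1)
        (by rw [hx i, hy i]; exact iff_of_false he (by rw [Nat.even_iff]; omega)) (by omega)
    obtain ⟨w, hwl⟩ := hm_sync hk hbip (2 * n₁ - 1) x y tx hx hwalks
    exact ⟨w, by omega⟩

/-- Any two vertices of `HM_k` (`k ≥ 1`) are joined by a walk of length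
at most `2 * (k - 1) + 2 * n₁`. -/
private lemma hm_diam_walk {k : ℕ} (hk : 0 < k) (hconn : G.Connected)
    (hbip : ∀ x y : Fin N, G.Adj x y → typ x ≠ typ y) {n₁ : ℕ}
    (hn₁ : n₁ = (Finset.univ.filter fun x : Fin N => typ x = true).card) (hn1pos : 1 ≤ n₁)
    {nb : Fin N → Fin N} (hnb : ∀ v, G.Adj v (nb v)) (u v : Fin k → Fin N) :
    ∃ w : (HM N G typ k).Walk u v, w.length ≤ 2 * (k - 1) + 2 * n₁ := by
  have hlast : (k - 1 : ℕ) < k := by omega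
  obtain ⟨tu, u', hu', w1, hw1⟩ := hm_mono hk hnb hbip (k - 1) u (typ (u ⟨k - 1, hlast⟩))
    (fun i hi => by
      have : (i : ℕ) = k - 1 := by have := i.isLt; omega
      rw [show i = ⟨k - 1, hlast⟩ from Fin.ext this])
  obtain ⟨tv, v', hv', w3, hw3⟩ := hm_mono hk hnb hbip (k - 1) v (typ (v ⟨k - 1, hlast⟩))
    (fun i hi => by
      have : (i : ℕ) = k - 1 := by have := i.isLt; omega
      rw [show i = ⟨k - 1, hlast⟩ from Fin.ext this])
  obtain ⟨w2, hw2⟩ := hm_connect hk hconn hbip hn₁ hn1pos hnb u' v' tu tv hu' hv'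
  refine ⟨w1.append (w2.append w3.reverse), ?_⟩
  simp only [SimpleGraph.Walk.length_append, SimpleGraph.Walk.length_reverse]
  omega

end WalkAux

/-- With `ℓ_k := diam(HM_k) + 1` and `n₁ = |V₁| ≤ n₂ = |V₂|`, if
`n - k ≥ n₁` then `N_B^n(ℓ_k) ≥ N^(n - k + 1 - n₁)`. -/
theorem hm_boxing_lower (N : ℕ) (G : SimpleGraph (Fin N)) (typ : Fin N → Bool)
    (hconn : G.Connected)
    (hbip : ∀ x y : Fin N, G.Adj x y → typ x ≠ typ y)
    (hV1 : ∃ x, typ x = true) (hV2 : ∃ x, typ x = false)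
    (n₁ n₂ : ℕ)
    (hn₁ : n₁ = (Finset.univ.filter fun x : Fin N => typ x = true).card)
    (hn₂ : n₂ = (Finset.univ.filter fun x : Fin N => typ x = false).card)
    (hle : n₁ ≤ n₂)
    (n k : ℕ) (hnk : n₁ ≤ n - k) (hkn : k ≤ n) :
    N ^ (n - k + 1 - n₁) ≤ coveringNumber (HM N G typ n) ((HM N G typ k).diam + 1) := by
  classical
  obtain ⟨a, ha⟩ := hV1
  obtain ⟨b0, hb0⟩ := hV2
  set c : Bool → Fin N := fun t => if t then a else b0 with hcdef
  have hc : ∀ t, typ (c t) = t := fun t => by cases t <;> simp [hcdef, ha, hb0]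
  have hn1pos : 1 ≤ n₁ := by
    rw [hn₁]; exact Finset.card_pos.mpr ⟨a, by simp [ha]⟩
  choose nb hnb using exists_adj hconn ⟨a, ha⟩ ⟨b0, hb0⟩
  set m' := n - k - n₁ with hm'def
  set L := k + n₁ - 1 with hLdef
  have harith1 : m' + 1 + L = n := by omega
  have hml : m' + L < n := by omega
  have hexp : n - k + 1 - n₁ = m' + 1 := by omega
  rw [hexp]
  have hdiam : (HM N G typ k).diam ≤ 2 * L := by
    rcases Nat.eq_zero_or_pos k with hk0 | hkpos
    · subst hk0
      have hsub : Subsingleton (Fin 0 → Fin N) := ⟨fun p q => funext fun i => i.elim0⟩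
      have h0 : (HM N G typ 0).ediam = 0 := SimpleGraph.ediam_eq_zero_of_subsingleton
      simp [SimpleGraph.diam, h0]
    · have hed : (HM N G typ k).ediam ≤ ((2 * L : ℕ) : ℕ∞) := by
        apply SimpleGraph.ediam_le_of_edist_le
        intro u v
        obtain ⟨w, hw⟩ := hm_diam_walk hkpos hconn hbip hn₁ hn1pos hnb u v
        refine le_trans w.edist_le ?_
        exact_mod_cast (show w.length ≤ 2 * L by omega)
      have h2 := ENat.toNat_le_toNat hed (ENat.coe_ne_top _)
      simpa [SimpleGraph.diam] using h2
  unfold coveringNumber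
  apply le_csInf
  · refine ⟨(Finset.univ.image fun v : Fin n → Fin N =>
      SimpleGraph.singletonSubgraph (HM N G typ n) v).card,
      Finset.univ.image fun v : Fin n → Fin N =>
      SimpleGraph.singletonSubgraph (HM N G typ n) v, rfl, ?_, ?_⟩
    · intro B hB
      simp only [Finset.mem_image] at hB
      obtain ⟨v, -, rfl⟩ := hB
      rintro ⟨u, hu⟩ ⟨w, hw⟩
      simp only [SimpleGraph.singletonSubgraph_verts, Set.mem_singleton_iff] at hu hw
      subst hu
      subst hw
      exact ⟨SimpleGraph.Reachable.refl _, by simp [SimpleGraph.dist_self]⟩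
    · intro v
      exact ⟨_, Finset.mem_image_of_mem _ (Finset.mem_univ v), by
        simp [SimpleGraph.singletonSubgraph_verts]⟩
  · rintro b ⟨F, rfl, hbox, hcov⟩
    choose Bf hBf hBfm using fun w : Fin (m' + 1) → Fin N => hcov (hmFam (n := n) typ c m' w)
    have hinj : Function.Injective fun w : Fin (m' + 1) → Fin N =>
        (⟨Bf w, hBf w⟩ : {B // B ∈ F}) := by
      intro w w' he
      by_contra hww
      obtain ⟨i, him, hne⟩ := hmFam_ne (typ := typ) (c := c) (n := n) (by omega) hww
      simp only [Subtype.mk.injEq] at he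
      have h2 : hmFam (n := n) typ c m' w' ∈ (Bf w).verts := by rw [he]; exact hBfm w'
      obtain ⟨hr, hd⟩ := hbox (Bf w) (hBf w) ⟨_, hBfm w⟩ ⟨_, h2⟩
      obtain ⟨p, -, hplen⟩ := hr.exists_path_of_dist
      have hlow := hm_walk_lower (d := a) hml (p.map ((Bf w).hom)) ⟨i, him, hne⟩
      have hlow2 : hmPhi typ a m' L (hmFam (n := n) typ c m' w) +
          hmPhi typ a m' L (hmFam (n := n) typ c m' w') + 1 ≤
          (p.map ((Bf w).hom)).length := hlow
      rw [hmFam_phi hc harith1, hmFam_phi hc harith1, SimpleGraph.Walk.length_map] at hlow2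
      omega
    calc N ^ (m' + 1) = Fintype.card (Fin (m' + 1) → Fin N) := by simp
      _ ≤ Fintype.card {B // B ∈ F} := Fintype.card_le_of_injective _ hinj
      _ = F.card := Fintype.card_coe F
end

section
/- In the Song–Havlin–Makse model with parameter p = 1, started from a tree SHM_0, and with ℓ_k := diam(SHM¹_k) + 1, the minimum number of ℓ_k-boxes needed to cover SHM¹_n satisfies N_B^n(ℓ_k) ≥ V(n − k − ⌈diam(SHM_0)/2⌉) whenever n ≥ k + ⌈diam(SHM_0)/2⌉. -/
open Filter Finset

/-- One growth step of the Song–Havlin–Makse model with `p = 1` (Mode I only):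
every old edge is kept and every old vertex `v` receives `m · deg(v)` new pendant
(leaf) neighbours. -/
def shmStep {V : Type} (m : ℕ) (G : SimpleGraph V) :
    SimpleGraph (V ⊕ (Σ v : V, Fin (m * (G.neighborSet v).ncard))) :=
  SimpleGraph.fromRel (fun a b =>
    match a, b with
    | Sum.inl u, Sum.inl v => G.Adj u v
    | Sum.inl u, Sum.inr w => u = w.1
    | _, _ => False)

/-- The Song–Havlin–Makse graph sequence with `p = 1` (Mode I only), started from the
graph `G0`: `(SHM m V0 G0 n).2` is the graph at time `n`, on vertex type
`(SHM m V0 G0 n).1`. -/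
def SHM (m : ℕ) (V0 : Type) (G0 : SimpleGraph V0) : (n : ℕ) → Σ V : Type, SimpleGraph V
  | 0 => ⟨V0, G0⟩
  | n + 1 => ⟨_, shmStep m (SHM m V0 G0 n).2⟩


open SimpleGraph Sum

namespace ShmAux

variable {V : Type} {m : ℕ} {G : SimpleGraph V}

/-- projection back to the old vertex set -/
def π (m : ℕ) (G : SimpleGraph V) :
    (V ⊕ (Σ v : V, Fin (m * (G.neighborSet v).ncard))) → V
  | Sum.inl v => v
  | Sum.inr w => w.1

lemma adj_inl_inl {u v : V} : (shmStep m G).Adj (inl u) (inl v) ↔ G.Adj u v := by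
  simp only [shmStep, fromRel_adj]
  constructor
  · rintro ⟨-, h | h⟩
    · exact h
    · exact h.symm
  · exact fun h => ⟨by simpa using h.ne, Or.inl h⟩

lemma adj_inl_inr {u : V} {w : Σ v : V, Fin (m * (G.neighborSet v).ncard)} :
    (shmStep m G).Adj (inl u) (inr w) ↔ u = w.1 := by
  simp [shmStep, fromRel_adj]

lemma adj_inr {w : Σ v : V, Fin (m * (G.neighborSet v).ncard)}
    {x : V ⊕ (Σ v : V, Fin (m * (G.neighborSet v).ncard))} :
    (shmStep m G).Adj (inr w) x ↔ x = inl w.1 := by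
  cases x with
  | inl u =>
    rw [(shmStep m G).adj_comm, adj_inl_inr]
    exact ⟨fun h => by rw [h], fun h => by injection h⟩
  | inr w' => simp [shmStep, fromRel_adj]

/-- the inclusion of the old graph as a homomorphism -/
def inlHom (m : ℕ) (G : SimpleGraph V) : G →g shmStep m G :=
  ⟨Sum.inl, fun h => adj_inl_inl.2 h⟩

lemma adj_cases {a b : V ⊕ (Σ v : V, Fin (m * (G.neighborSet v).ncard))}
    (h : (shmStep m G).Adj a b) : G.Adj (π m G a) (π m G b) ∨ π m G a = π m G b := by
  cases a with
  | inl u =>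
    cases b with
    | inl v => exact Or.inl (adj_inl_inl.1 h)
    | inr w => exact Or.inr (adj_inl_inr.1 h)
  | inr w =>
    cases b with
    | inl v => right; injection (adj_inr.1 h) with h'; exact h'.symm
    | inr w' => exact absurd (adj_inr.1 h) (by simp)

lemma shmStep_connected (hc : G.Connected) : (shmStep m G).Connected := by
  have hne : Nonempty V := hc.nonempty
  have key : ∀ x, (shmStep m G).Reachable x (inl (π m G x)) := by
    rintro (v | w)
    · exact Reachable.refl _
    · exact (Adj.reachable (adj_inr.2 rfl))
  rw [connected_iff]
  refine ⟨fun a b => ?_, ⟨inl hne.some⟩⟩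
  refine (key a).trans (Reachable.trans ?_ (key b).symm)
  exact Reachable.map (inlHom m G) (hc (π m G a) (π m G b))

lemma dist_proj_le (hc : G.Connected) {a b : V ⊕ (Σ v : V, Fin (m * (G.neighborSet v).ncard))}
    (p : (shmStep m G).Walk a b) : G.dist (π m G a) (π m G b) ≤ p.length := by
  induction p with
  | nil => simp
  | @cons a c b h p ih =>
    rcases adj_cases h with h' | h'
    · calc G.dist (π m G a) (π m G b)
          ≤ G.dist (π m G a) (π m G c) + G.dist (π m G c) (π m G b) := hc.dist_triangle
        _ ≤ 1 + p.length := by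
            have : G.dist (π m G a) (π m G c) = 1 := dist_eq_one_iff_adj.2 h'
            omega
        _ ≤ (Walk.cons h p).length := by rw [Walk.length_cons]; omega
    · rw [h']
      exact le_trans ih (by rw [Walk.length_cons]; omega)

lemma dist_inl_inl (hc : G.Connected) (u v : V) :
    (shmStep m G).dist (inl u) (inl v) = G.dist u v := by
  refine le_antisymm ?_ ?_
  · obtain ⟨p, hp⟩ := hc.exists_walk_length_eq_dist u v
    calc (shmStep m G).dist (inl u) (inl v) ≤ (p.map (inlHom m G)).length := dist_le _
      _ = G.dist u v := by rw [Walk.length_map, hp]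
  · obtain ⟨p, hp⟩ := (shmStep_connected hc).exists_walk_length_eq_dist (inl u) (inl v)
    have := dist_proj_le hc p
    rw [hp] at this
    exact this

lemma dist_inr_ne (hc : G.Connected) {w : Σ v : V, Fin (m * (G.neighborSet v).ncard)}
    {x : V ⊕ (Σ v : V, Fin (m * (G.neighborSet v).ncard))} (hx : x ≠ inr w) :
    (shmStep m G).dist (inr w) x = (shmStep m G).dist (inl w.1) x + 1 := by
  have hcs := shmStep_connected (m := m) hc
  refine le_antisymm ?_ ?_
  · calc (shmStep m G).dist (inr w) x
        ≤ (shmStep m G).dist (inr w) (inl w.1) + (shmStep m G).dist (inl w.1) x :=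
          hcs.dist_triangle
      _ ≤ (shmStep m G).dist (inl w.1) x + 1 := by
          have : (shmStep m G).dist (inr w) (inl w.1) = 1 :=
            dist_eq_one_iff_adj.2 (adj_inr.2 rfl)
          omega
  · obtain ⟨p, hp⟩ := hcs.exists_walk_length_eq_dist (inr w) x
    cases p with
    | nil => exact absurd rfl hx.symm
    | @cons a c b h q =>
      have hc' : c = inl w.1 := adj_inr.1 h
      subst hc'
      have h1 : (shmStep m G).dist (inl w.1) x ≤ q.length := dist_le _
      rw [Walk.length_cons] at hp
      omega

lemma dist_inr_inr (hc : G.Connected) {w w' : Σ v : V, Fin (m * (G.neighborSet v).ncard)}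
    (hne : w ≠ w') :
    (shmStep m G).dist (inr w) (inr w') = G.dist w.1 w'.1 + 2 := by
  rw [dist_inr_ne hc (by simpa using hne.symm), dist_comm,
    dist_inr_ne hc (by simp), dist_inl_inl hc, dist_comm]


variable {V : Type} {m : ℕ} {G : SimpleGraph V}

lemma ediam_ne_top_of_connected [Finite V] (hc : G.Connected) : G.ediam ≠ ⊤ := by
  have : Nonempty V := hc.nonempty
  obtain ⟨u, v, h⟩ := exists_edist_eq_ediam_of_finite (G := G)
  rw [← h]
  exact edist_ne_top_iff_reachable.2 (hc u v)

lemma dist_step_le [Finite V] (hc : G.Connected)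
    (a b : V ⊕ (Σ v : V, Fin (m * (G.neighborSet v).ncard))) :
    (shmStep m G).dist a b ≤ G.diam + 2 := by
  have hd : ∀ u v : V, G.dist u v ≤ G.diam :=
    fun u v => dist_le_diam (ediam_ne_top_of_connected hc)
  cases a with
  | inl u =>
    cases b with
    | inl v => rw [dist_inl_inl hc]; have := hd u v; omega
    | inr w =>
      rw [dist_comm, dist_inr_ne hc (by simp), dist_inl_inl hc]
      have := hd w.1 u; omega
  | inr w =>
    cases b with
    | inl v =>
      rw [dist_inr_ne hc (by simp), dist_inl_inl hc]
      have := hd w.1 v; omega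
    | inr w' =>
      by_cases hww : w = w'
      · subst hww; rw [SimpleGraph.dist_self]; omega
      · rw [dist_inr_inr hc hww]; have := hd w.1 w'.1; omega

lemma diam_step_le [Finite V] (hc : G.Connected) :
    (shmStep m G).diam ≤ G.diam + 2 := by
  have : Nonempty V := hc.nonempty
  have : Nonempty (V ⊕ (Σ v : V, Fin (m * (G.neighborSet v).ncard))) := ⟨inl this.some⟩
  obtain ⟨a, b, h⟩ := exists_dist_eq_diam (G := shmStep m G)
  rw [← h]
  exact dist_step_le hc a b

lemma step_deg (hdeg : ∀ v, (G.neighborSet v).Nonempty)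
    (x : V ⊕ (Σ v : V, Fin (m * (G.neighborSet v).ncard))) :
    ((shmStep m G).neighborSet x).Nonempty := by
  cases x with
  | inl u =>
    obtain ⟨v, hv⟩ := hdeg u
    exact ⟨inl v, adj_inl_inl.2 hv⟩
  | inr w => exact ⟨inl w.1, adj_inr.2 rfl⟩

lemma ncard_pos_of_deg [Finite V] (hm : 1 ≤ m) (hdeg : ∀ v, (G.neighborSet v).Nonempty)
    (v : V) : 0 < m * (G.neighborSet v).ncard := by
  have h1 : 0 < (G.neighborSet v).ncard :=
    (Set.ncard_pos (Set.toFinite _)).2 (hdeg v)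
  exact Nat.mul_pos hm h1

/-- a fresh pendant child of `v` -/
def child [Finite V] (hm : 1 ≤ m) (hdeg : ∀ v, (G.neighborSet v).Nonempty) (v : V) :
    V ⊕ (Σ v : V, Fin (m * (G.neighborSet v).ncard)) :=
  inr ⟨v, ⟨0, ncard_pos_of_deg hm hdeg v⟩⟩

lemma child_ne [Finite V] (hm : 1 ≤ m) (hdeg : ∀ v, (G.neighborSet v).Nonempty)
    {v w : V} (h : v ≠ w) : child hm hdeg v ≠ child hm hdeg w := by
  intro hcw
  apply h
  have := inr_injective hcw
  exact congrArg Sigma.fst this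

lemma dist_child [Finite V] (hm : 1 ≤ m) (hc : G.Connected)
    (hdeg : ∀ v, (G.neighborSet v).Nonempty) {v w : V} (h : v ≠ w) :
    (shmStep m G).dist (child hm hdeg v) (child hm hdeg w) = G.dist v w + 2 := by
  unfold child
  rw [dist_inr_inr hc]
  intro heq
  exact h (congrArg Sigma.fst heq)

variable {V0 : Type}

lemma finite_SHM (m : ℕ) (G0 : SimpleGraph V0) [Finite V0] :
    ∀ n, Finite (SHM m V0 G0 n).1
  | 0 => ‹Finite V0›
  | n+1 => by
      have := finite_SHM m G0 n
      show Finite ((SHM m V0 G0 n).1 ⊕ _)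
      infer_instance

lemma connected_SHM (m : ℕ) (G0 : SimpleGraph V0) (hc : G0.Connected) :
    ∀ n, (SHM m V0 G0 n).2.Connected
  | 0 => hc
  | n+1 => shmStep_connected (connected_SHM m G0 hc n)

lemma deg_SHM (m : ℕ) (G0 : SimpleGraph V0) (hdeg : ∀ v, (G0.neighborSet v).Nonempty) :
    ∀ n x, (((SHM m V0 G0 n).2).neighborSet x).Nonempty
  | 0 => hdeg
  | n+1 => step_deg (deg_SHM m G0 hdeg n)

lemma diam_SHM (m : ℕ) (G0 : SimpleGraph V0) [Finite V0] (hc : G0.Connected) :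
    ∀ n, (SHM m V0 G0 n).2.diam ≤ G0.diam + 2 * n
  | 0 => le_refl _
  | n+1 => by
      letI := finite_SHM m G0 n
      have h1 : (SHM m V0 G0 (n+1)).2.diam ≤ (SHM m V0 G0 n).2.diam + 2 :=
        diam_step_le (connected_SHM m G0 hc n)
      have h2 := diam_SHM m G0 hc n
      omega

def emb (m : ℕ) (G0 : SimpleGraph V0) [Finite V0] (hm : 1 ≤ m)
    (hdeg : ∀ v, (G0.neighborSet v).Nonempty) :
    ∀ (j t : ℕ), (SHM m V0 G0 j).1 → (SHM m V0 G0 (j + t)).1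
  | _, 0 => id
  | j, t+1 => fun v =>
      letI := finite_SHM m G0 (j+t)
      child hm (deg_SHM m G0 hdeg (j+t)) (emb m G0 hm hdeg j t v)

lemma emb_dist (m : ℕ) (G0 : SimpleGraph V0) [Finite V0] (hm : 1 ≤ m)
    (hc : G0.Connected) (hdeg : ∀ v, (G0.neighborSet v).Nonempty) (j : ℕ) :
    ∀ (t : ℕ) {v w : (SHM m V0 G0 j).1}, v ≠ w →
      emb m G0 hm hdeg j t v ≠ emb m G0 hm hdeg j t w ∧
      2 * t + 1 ≤ (SHM m V0 G0 (j+t)).2.dist (emb m G0 hm hdeg j t v) (emb m G0 hm hdeg j t w)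
  | 0, v, w, hne => by
      refine ⟨hne, ?_⟩
      show 2 * 0 + 1 ≤ (SHM m V0 G0 (j+0)).2.dist v w
      have := (connected_SHM m G0 hc (j+0)).pos_dist_of_ne hne
      omega
  | t+1, v, w, hne => by
      obtain ⟨h1, h2⟩ := emb_dist m G0 hm hc hdeg j t hne
      letI := finite_SHM m G0 (j+t)
      constructor
      · exact child_ne hm (deg_SHM m G0 hdeg (j+t)) h1
      · show 2 * (t+1) + 1 ≤ (shmStep m (SHM m V0 G0 (j+t)).2).dist
            (child hm (deg_SHM m G0 hdeg (j+t)) (emb m G0 hm hdeg j t v))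
            (child hm (deg_SHM m G0 hdeg (j+t)) (emb m G0 hm hdeg j t w))
        rw [dist_child hm (connected_SHM m G0 hc (j+t)) _ h1]
        omega
lemma covering_set_nonempty {W : Type} [Finite W] (H : SimpleGraph W) (ℓ : ℕ) :
    {s : ℕ | ∃ F : Finset H.Subgraph, F.card = s ∧ (∀ B ∈ F, H.IsBox ℓ B) ∧
      ∀ v : W, ∃ B ∈ F, v ∈ B.verts}.Nonempty := by
  classical
  haveI := Fintype.ofFinite W
  refine ⟨_, Finset.univ.image (fun v => H.singletonSubgraph v), rfl, ?_, ?_⟩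
  · intro B hB
    obtain ⟨v, -, rfl⟩ := Finset.mem_image.1 hB
    intro u u'
    have hu : (u : W) = v := u.2
    have hu' : (u' : W) = v := u'.2
    have huu : u = u' := Subtype.ext (hu.trans hu'.symm)
    subst huu
    exact ⟨Reachable.refl _, by rw [SimpleGraph.dist_self]; omega⟩
  · intro v
    exact ⟨_, Finset.mem_image_of_mem _ (Finset.mem_univ v), rfl⟩

lemma dist_le_of_isBox {W : Type} {H : SimpleGraph W} {ℓ : ℕ} {B : H.Subgraph}
    (hB : H.IsBox ℓ B) {a b : W} (ha : a ∈ B.verts) (hb : b ∈ B.verts) :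
    H.dist a b ≤ ℓ - 1 := by
  obtain ⟨hr, hd⟩ := hB ⟨a, ha⟩ ⟨b, hb⟩
  obtain ⟨p, hp⟩ := hr.exists_walk_length_eq_dist
  calc H.dist a b ≤ (p.map B.hom).length := dist_le _
    _ = B.coe.dist ⟨a, ha⟩ ⟨b, hb⟩ := by rw [Walk.length_map, hp]
    _ ≤ ℓ - 1 := hd

lemma key (m : ℕ) (hm : 1 ≤ m) {V0 : Type} [Finite V0] (G0 : SimpleGraph V0)
    (hc : G0.Connected) (hdeg : ∀ v, (G0.neighborSet v).Nonempty)
    (j t ℓ : ℕ) (hℓ : ℓ - 1 < 2 * t + 1) :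
    Nat.card (SHM m V0 G0 j).1 ≤ coveringNumber (SHM m V0 G0 (j + t)).2 ℓ := by
  classical
  letI := finite_SHM m G0 (j+t)
  refine le_csInf (covering_set_nonempty _ _) ?_
  rintro s ⟨F, rfl, hbox, hcov⟩
  choose f hfF hfmem using fun v : (SHM m V0 G0 j).1 => hcov (emb m G0 hm hdeg j t v)
  have hinj : Function.Injective (fun v => (⟨f v, hfF v⟩ : {B // B ∈ F})) := by
    intro v w hvw
    by_contra hne
    simp only [Subtype.mk.injEq] at hvw
    obtain ⟨hne', hd⟩ := emb_dist m G0 hm hc hdeg j t hne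
    have h1 : (SHM m V0 G0 (j+t)).2.dist (emb m G0 hm hdeg j t v) (emb m G0 hm hdeg j t w)
        ≤ ℓ - 1 :=
      dist_le_of_isBox (hbox _ (hfF v)) (hfmem v) (by rw [hvw]; exact hfmem w)
    omega
  calc Nat.card (SHM m V0 G0 j).1 ≤ Nat.card {B // B ∈ F} :=
      Nat.card_le_card_of_injective _ hinj
    _ = F.card := Nat.card_eq_finsetCard F

lemma one_le_coveringNumber {W : Type} [Finite W] [Nonempty W] (H : SimpleGraph W) (ℓ : ℕ) :
    1 ≤ coveringNumber H ℓ := by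
  refine le_csInf (covering_set_nonempty H ℓ) ?_
  rintro s ⟨F, rfl, -, hcov⟩
  obtain ⟨B, hBF, -⟩ := hcov (Classical.arbitrary W)
  exact Finset.card_pos.2 ⟨B, hBF⟩

lemma nonempty_SHM (m : ℕ) {V0 : Type} (G0 : SimpleGraph V0) (h : Nonempty V0) :
    ∀ n, Nonempty (SHM m V0 G0 n).1
  | 0 => h
  | n+1 => ⟨inl (nonempty_SHM m G0 h n).some⟩

lemma subsingleton_SHM (m : ℕ) {V0 : Type} (G0 : SimpleGraph V0) (h : Subsingleton V0) :
    ∀ n, Subsingleton (SHM m V0 G0 n).1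
  | 0 => h
  | n+1 => by
      have ih := subsingleton_SHM m G0 h n
      have hempty : ∀ x : (SHM m V0 G0 n).1, ((SHM m V0 G0 n).2.neighborSet x) = ∅ := by
        intro x
        ext y
        simp only [SimpleGraph.mem_neighborSet, Set.mem_empty_iff_false, iff_false]
        exact fun hadj => hadj.ne (Subsingleton.elim _ _)
      constructor
      rintro (a | a) (b | b)
      · rw [Subsingleton.elim a b]
      · exact absurd b.2.2 (by simp [hempty b.1])
      · exact absurd a.2.2 (by simp [hempty a.1])
      · exact absurd a.2.2 (by simp [hempty a.1])
end ShmAux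
/-- In the SHM model with `p = 1` started from a tree, with
`ℓ_k := diam(SHM¹_k) + 1`: whenever `n ≥ k + ⌈diam(SHM_0)/2⌉` one has
`N_B^n(ℓ_k) ≥ V(n - k - ⌈diam(SHM_0)/2⌉)`.  (Here `⌈d/2⌉ = (d+1)/2` in `ℕ`.) -/
theorem shm_boxing_lower (m : ℕ) (hm : 1 ≤ m) (V0 : Type) [Fintype V0]
    (G0 : SimpleGraph V0) (htree : G0.IsTree) (n k : ℕ)
    (h : k + (G0.diam + 1) / 2 ≤ n) :
    Nat.card (SHM m V0 G0 (n - k - (G0.diam + 1) / 2)).1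
      ≤ coveringNumber (SHM m V0 G0 n).2 ((SHM m V0 G0 k).2.diam + 1) := by
  have hc : G0.Connected := htree.1
  by_cases hdeg : ∀ v : V0, (G0.neighborSet v).Nonempty
  · obtain ⟨j, hj1, hj2⟩ : ∃ j, n - k - (G0.diam + 1) / 2 = j ∧
        n = j + (k + (G0.diam + 1) / 2) := ⟨_, rfl, by omega⟩
    rw [hj1, hj2]
    refine ShmAux.key m hm G0 hc hdeg j _ _ ?_
    have hdk := ShmAux.diam_SHM m G0 hc k
    omega
  · push_neg at hdeg
    obtain ⟨v0, hv0⟩ := hdeg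
    have hall : ∀ u : V0, u = v0 := by
      intro u
      by_contra hu
      obtain ⟨p⟩ := hc v0 u
      cases p with
      | nil => exact hu rfl
      | cons hadj q =>
        have : _ ∈ G0.neighborSet v0 := hadj
        rw [hv0] at this
        exact this
    have hsub : Subsingleton V0 := ⟨fun a b => (hall a).trans (hall b).symm⟩
    have hne : Nonempty V0 := hc.nonempty
    letI := ShmAux.finite_SHM m G0 n
    letI := ShmAux.nonempty_SHM m G0 hne n
    letI := ShmAux.subsingleton_SHM m G0 hsub (n - k - (G0.diam + 1) / 2)
    letI := ShmAux.nonempty_SHM m G0 hne (n - k - (G0.diam + 1) / 2)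
    rw [Nat.card_unique]
    exact ShmAux.one_le_coveringNumber _ _
end
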